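/- Let X and X' be topological spaces with X' Hausdorff, let π : X → X' be a continuous, open surjection, let A be a topological abelian group, and let f ∈ C_c(X, A) be constant on every fibre of π, i.e. f(x) = f(y) whenever π(x) = π(y). Then there exists a unique function f̄ : X' → A with f = f̄ ∘ π; this f̄ is continuous, satisfies supp(f̄) ⊆ π(supp(f)), and f̄ ∈ C_c(X', A). (This is the kernel computation in Proposition 3.1.21: a compactly supported function that is constant on fibres of π descends to a compactly supported function on the base.) -/

import Mathlib

open Set Function

/-- Kernel computation in **Proposition 3.1.21**: let `π : X → X'` be a continuous open
surjection with `X'` Hausdorff, `A` a topological abelian group, and `f ∈ C_c(X, A)`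
constant on every fibre of `π`. Then there is a unique `f̄ : X' → A` with `f = f̄ ∘ π`;
this `f̄` is continuous, has support contained in `π '' supp f`, and has compact support,
i.e. `f̄ ∈ C_c(X', A)`. -/
theorem descend_compactlySupported {X X' A : Type*} [TopologicalSpace X]
    [TopologicalSpace X'] [T2Space X']
    [AddCommGroup A] [TopologicalSpace A] [IsTopologicalAddGroup A]
    (π : X → X') (hcont : Continuous π) (hopen : IsOpenMap π)
    (hsurj : Function.Surjective π)
    (f : X → A) (hf : Continuous f) (hfc : HasCompactSupport f)
    (hconst : ∀ x y : X, π x = π y → f x = f y) :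
    ∃ fbar : X' → A,
      f = fbar ∘ π ∧
      Continuous fbar ∧
      tsupport fbar ⊆ π '' tsupport f ∧
      HasCompactSupport fbar ∧
      ∀ g : X' → A, f = g ∘ π → g = fbar := by
  set fbar : X' → A := fun x' => f (surjInv hsurj x') with hfbar
  have hfac : f = fbar ∘ π := by
    funext x
    exact hconst x (surjInv hsurj (π x)) (surjInv_eq hsurj (π x)).symm
  have hq := hopen.isQuotientMap hcont hsurj
  have hcontbar : Continuous fbar := by
    rw [hq.continuous_iff]; rw [← hfac]; exact hf
  have hclosed : IsClosed (π '' tsupport f) :=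
    (hfc.image hcont).isClosed
  have hsupp : tsupport fbar ⊆ π '' tsupport f := by
    apply closure_minimal _ hclosed
    intro x' hx'
    exact ⟨surjInv hsurj x', subset_closure hx', surjInv_eq hsurj x'⟩
  refine ⟨fbar, hfac, hcontbar, hsupp, ?_, ?_⟩
  · exact IsCompact.of_isClosed_subset (hfc.image hcont) (isClosed_tsupport _) hsupp
  · intro g hg
    funext x'
    obtain ⟨x, rfl⟩ := hsurj x'
    have := congrFun hg x
    have h2 := congrFun hfac x
    simp only [comp_apply] at this h2
    rw [← this, h2]
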